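/- Let X be a compact length space and let C : [0,L] → X be a shortest noncontractible rectifiable loop in X, parametrized by arclength. If the image of C is contained in an open ball B(q, δ), then L < 2δ. -/

import Mathlib

open Metric

/-- The length of a path in a metric space, as its total variation. -/
noncomputable def pathLength {X : Type*} [MetricSpace X] {x y : X} (γ : Path x y) : ENNReal :=
  eVariationOn (fun t => γ t) Set.univ

/-- A metric space is a length space if the distance between any two points is the
infimum of the lengths of paths joining them. -/
def IsLengthSpace (X : Type*) [MetricSpace X] : Prop :=
  ∀ x y : X, ∀ ε > 0, ∃ γ : Path x y, pathLength γ < ENNReal.ofReal (dist x y + ε)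

/-- A loop is noncontractible if it is not null-homotopic. -/
def Noncontractible {X : Type*} [TopologicalSpace X] {x : X} (γ : Path x x) : Prop :=
  ¬ γ.Homotopic (Path.refl x)

open Set unitInterval CategoryTheory
open scoped NNReal ENNReal
attribute [local instance] Path.Homotopic.setoid

namespace SNL


/-- affine map of `I` onto `[u,w]`. -/
def segMap (u w : I) (h : u ≤ w) (s : I) : I :=
  ⟨(u : ℝ) + s * (w - u), by
    constructor
    · have : (0:ℝ) ≤ (s:ℝ) * (w - u) := mul_nonneg s.2.1 (by linarith [Subtype.coe_le_coe.2 h])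
      linarith [u.2.1]
    · have h1 : (s:ℝ) * ((w:ℝ) - u) ≤ 1 * ((w:ℝ) - u) :=
        mul_le_mul_of_nonneg_right s.2.2 (by linarith [Subtype.coe_le_coe.2 h])
      have := w.2.2
      linarith⟩

lemma segMap_continuous (u w : I) (h : u ≤ w) : Continuous (segMap u w h) := by
  apply Continuous.subtype_mk
  continuity

lemma segMap_zero (u w : I) (h : u ≤ w) : segMap u w h 0 = u := by
  simp [segMap]

lemma segMap_one (u w : I) (h : u ≤ w) : segMap u w h 1 = w := by
  apply Subtype.ext
  simp [segMap]

lemma segMap_monotone (u w : I) (h : u ≤ w) : Monotone (segMap u w h) := by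
  intro a b hab
  have hwu : (0:ℝ) ≤ (w:ℝ) - u := by linarith [Subtype.coe_le_coe.2 h]
  simp only [segMap, Subtype.mk_le_mk]
  have : (a:ℝ) * ((w:ℝ) - u) ≤ (b:ℝ) * ((w:ℝ) - u) :=
    mul_le_mul_of_nonneg_right (Subtype.coe_le_coe.2 hab) hwu
  exact Subtype.mk_le_mk.2 (by linarith)

lemma segMap_image (u w : I) (h : u ≤ w) : segMap u w h '' univ = Icc u w := by
  apply Subset.antisymm
  · rintro _ ⟨s, -, rfl⟩
    constructor
    · have : (0:ℝ) ≤ (s:ℝ) * (w - u) := mul_nonneg s.2.1 (by linarith [Subtype.coe_le_coe.2 h])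
      exact Subtype.coe_le_coe.1 (by simp [segMap]; linarith)
    · have h1 : (s:ℝ) * ((w:ℝ) - u) ≤ 1 * ((w:ℝ) - u) :=
        mul_le_mul_of_nonneg_right s.2.2 (by linarith [Subtype.coe_le_coe.2 h])
      exact Subtype.coe_le_coe.1 (by simp [segMap]; linarith)
  · rintro z ⟨hz1, hz2⟩
    rcases eq_or_lt_of_le h with rfl | hlt
    · have : z = u := le_antisymm hz2 hz1
      exact ⟨0, mem_univ _, by rw [segMap_zero]; exact this.symm⟩
    · have hwu : (0:ℝ) < (w:ℝ) - u := by
        have := Subtype.coe_lt_coe.2 hlt; linarith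
      refine ⟨⟨((z:ℝ) - u) / ((w:ℝ) - u), ?_, ?_⟩, mem_univ _, ?_⟩
      · apply div_nonneg _ hwu.le
        linarith [Subtype.coe_le_coe.2 hz1]
      · rw [div_le_one hwu]
        linarith [Subtype.coe_le_coe.2 hz2]
      · apply Subtype.ext
        show (u:ℝ) + ((z:ℝ) - u) / ((w:ℝ) - u) * ((w:ℝ) - u) = z
        rw [div_mul_cancel₀ _ hwu.ne']; ring

variable {X : Type*} [MetricSpace X]

/-- The restriction of a continuous `g : I → X` to `[u,w]`, as a path. -/
def subpath (g : I → X) (hg : Continuous g) (u w : I) (h : u ≤ w) : Path (g u) (g w) where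
  toFun := g ∘ segMap u w h
  continuous_toFun := hg.comp (segMap_continuous u w h)
  source' := by simp [segMap_zero]
  target' := by simp [segMap_one]

lemma pathLength_subpath (g : I → X) (hg : Continuous g) (u w : I) (h : u ≤ w) :
    pathLength (subpath g hg u w h) = eVariationOn g (Icc u w) := by
  have : (fun t => subpath g hg u w h t) = g ∘ segMap u w h := rfl
  rw [pathLength, this, eVariationOn.comp_eq_of_monotoneOn g _ ((segMap_monotone u w h).monotoneOn _),
    segMap_image]


variable {X : Type*} [MetricSpace X] {x y z : X}

lemma pathLength_symm_le (γ : Path x y) : pathLength γ.symm ≤ pathLength γ := by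
  have h1 : (fun t => γ.symm t) = (fun t => γ t) ∘ unitInterval.symm := rfl
  rw [pathLength, h1]
  have h2 : eVariationOn ((fun t => γ t) ∘ unitInterval.symm) univ
      ≤ eVariationOn (fun t => γ t) univ :=
    eVariationOn.comp_le_of_antitoneOn _ _
      (fun a _ b _ hab => unitInterval.symm_le_symm.2 hab) (mapsTo_univ _ _)
  exact h2

noncomputable def half : I := ⟨1/2, by norm_num⟩

lemma univ_eq_Icc : (univ : Set I) = Icc 0 1 := by
  ext t
  simp only [mem_univ, mem_Icc, true_iff]
  exact ⟨Subtype.coe_le_coe.1 t.2.1, Subtype.coe_le_coe.1 t.2.2⟩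

lemma pathLength_trans_le (γ : Path x y) (γ' : Path y z) :
    pathLength (γ.trans γ') ≤ pathLength γ + pathLength γ' := by
  classical
  have hsplit : eVariationOn (fun t => (γ.trans γ') t) (Icc 0 half) +
      eVariationOn (fun t => (γ.trans γ') t) (Icc half 1) =
      eVariationOn (fun t => (γ.trans γ') t) (Icc (0:I) 1) := by
    have := eVariationOn.Icc_add_Icc (fun t => (γ.trans γ') t) (s := (univ : Set I))
      (a := 0) (b := half) (c := 1) (Subtype.mk_le_mk.2 (by norm_num [half])) 
      (Subtype.mk_le_mk.2 (by norm_num [half])) (mem_univ _)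
    simpa using this
  rw [pathLength, univ_eq_Icc, ← hsplit]
  have hψ : ∀ s : I, ((min (2 * (s:ℝ)) 1) ∈ I) := by
    intro s
    constructor
    · exact le_min (by linarith [s.2.1]) zero_le_one
    · exact min_le_right _ _
  have hψ' : ∀ s : I, ((max (2 * (s:ℝ) - 1) 0) ∈ I) := by
    intro s
    constructor
    · exact le_max_right _ _
    · exact max_le (by linarith [s.2.2]) zero_le_one
  set ψ : I → I := fun s => ⟨min (2 * (s:ℝ)) 1, hψ s⟩ with hψdef
  set ψ' : I → I := fun s => ⟨max (2 * (s:ℝ) - 1) 0, hψ' s⟩ with hψ'def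
  have e1 : eVariationOn (fun t => (γ.trans γ') t) (Icc 0 half)
      ≤ pathLength γ := by
    have heq : EqOn (fun t => (γ.trans γ') t) ((fun t => γ t) ∘ ψ) (Icc 0 half) := by
      intro t ht
      have ht2 : (t:ℝ) ≤ 1/2 := by
        have := ht.2; exact_mod_cast this
      simp only [Function.comp_apply, Path.trans_apply, dif_pos ht2, hψdef]
      congr 1
      apply Subtype.ext
      simp
      linarith
    rw [eVariationOn.eq_of_eqOn heq, pathLength]
    exact eVariationOn.comp_le_of_monotoneOn _ _
      ((Monotone.monotoneOn (fun a b hab => by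
        simp only [ψ, Subtype.mk_le_mk]
        exact min_le_min (by linarith [Subtype.coe_le_coe.2 hab]) le_rfl) _))
      (mapsTo_univ _ _)
  have e2 : eVariationOn (fun t => (γ.trans γ') t) (Icc half 1)
      ≤ pathLength γ' := by
    have heq : EqOn (fun t => (γ.trans γ') t) ((fun t => γ' t) ∘ ψ') (Icc half 1) := by
      intro t ht
      have ht2 : (1:ℝ)/2 ≤ (t:ℝ) := by
        have := ht.1; exact_mod_cast this
      simp only [Function.comp_apply, Path.trans_apply]
      by_cases hc : (t:ℝ) ≤ 1/2
      · have htv : (t:ℝ) = 1/2 := le_antisymm hc ht2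
        rw [dif_pos hc]
        have h2t : (2 * (t:ℝ)) = 1 := by rw [htv]; ring
        have hmax : max (2 * (t:ℝ) - 1) 0 = 0 := by rw [h2t]; norm_num
        have e1 : γ ⟨2 * (t:ℝ), (mul_pos_mem_iff zero_lt_two).2 ⟨t.2.1, hc⟩⟩ = y := by
          have he : (⟨2 * (t:ℝ), (mul_pos_mem_iff zero_lt_two).2 ⟨t.2.1, hc⟩⟩ : I) = 1 :=
            Subtype.ext (by simpa using h2t)
          rw [he]; exact γ.target
        have e2 : ψ' t = 0 := Subtype.ext (by simp [ψ', hmax])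
        rw [e1, e2]
        exact (γ'.source).symm
      · rw [dif_neg hc]
        congr 1
        apply Subtype.ext
        simp only [ψ']
        push_neg at hc
        rw [max_eq_left (by linarith)]
    rw [eVariationOn.eq_of_eqOn heq, pathLength]
    exact eVariationOn.comp_le_of_monotoneOn _ _
      ((Monotone.monotoneOn (fun a b hab => by
        simp only [ψ', Subtype.mk_le_mk]
        exact max_le_max (by linarith [Subtype.coe_le_coe.2 hab]) le_rfl) _))
      (mapsTo_univ _ _)
  exact add_le_add e1 e2


variable {X : Type*} [MetricSpace X]

lemma subpath_refl (g : I → X) (hg : Continuous g) (u : I) :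
    subpath g hg u u le_rfl = Path.refl (g u) := by
  ext s
  show g (segMap u u le_rfl s) = g u
  congr 1
  apply Subtype.ext
  simp [segMap]

lemma subpath_trans_homotopic (g : I → X) (hg : Continuous g) (u v w : I)
    (huv : u ≤ v) (hvw : v ≤ w) :
    ((subpath g hg u v huv).trans (subpath g hg v w hvw)).Homotopic
      (subpath g hg u w (huv.trans hvw)) := by
  rcases eq_or_lt_of_le (huv.trans hvw) with heq | hlt
  · -- u = w hence u = v = w
    have hv : u = v := le_antisymm huv (hvw.trans heq.ge)
    subst hv
    subst heq
    rw [subpath_refl, Path.refl_trans_refl]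
  · -- u < w
    have hwu : (0:ℝ) < (w:ℝ) - u := by
      have := Subtype.coe_lt_coe.2 hlt; linarith
    set c : ℝ := ((v:ℝ) - u) / ((w:ℝ) - u) with hc
    have hc0 : 0 ≤ c := div_nonneg (by linarith [Subtype.coe_le_coe.2 huv]) hwu.le
    have hc1 : c ≤ 1 := by
      rw [div_le_one hwu]; linarith [Subtype.coe_le_coe.2 hvw]
    have hcmul : c * ((w:ℝ) - u) = (v:ℝ) - u := by
      rw [hc]; exact div_mul_cancel₀ _ hwu.ne'
    have hφmem : ∀ s : I, min (2*(s:ℝ)) 1 * c + max (2*(s:ℝ)-1) 0 * (1-c) ∈ I := by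
      intro s
      constructor
      · apply add_nonneg
        · exact mul_nonneg (le_min (by linarith [s.2.1]) zero_le_one) hc0
        · exact mul_nonneg (le_max_right _ _) (by linarith)
      · calc min (2*(s:ℝ)) 1 * c + max (2*(s:ℝ)-1) 0 * (1-c)
            ≤ 1 * c + 1 * (1-c) := by
              apply add_le_add
              · exact mul_le_mul_of_nonneg_right (min_le_right _ _) hc0
              · exact mul_le_mul_of_nonneg_right
                  (max_le (by linarith [s.2.2]) zero_le_one) (by linarith)
          _ = 1 := by ring
    set φ : I → I := fun s => ⟨min (2*(s:ℝ)) 1 * c + max (2*(s:ℝ)-1) 0 * (1-c), hφmem s⟩ with hφ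
    have hφcont : Continuous φ := by
      apply Continuous.subtype_mk; continuity
    have hφ0 : φ 0 = 0 := by
      apply Subtype.ext
      show min (2*(((0:I)):ℝ)) 1 * c + max (2*(((0:I)):ℝ)-1) 0 * (1-c) = (((0:I)):ℝ)
      norm_num
    have hφ1 : φ 1 = 1 := by
      apply Subtype.ext
      show min (2*(((1:I)):ℝ)) 1 * c + max (2*(((1:I)):ℝ)-1) 0 * (1-c) = (((1:I)):ℝ)
      norm_num
    have key : (subpath g hg u v huv).trans (subpath g hg v w hvw)
        = (subpath g hg u w (huv.trans hvw)).reparam φ hφcont hφ0 hφ1 := by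
      ext s
      rw [Path.trans_apply]
      show _ = g (segMap u w (huv.trans hvw) (φ s))
      by_cases hs : (s:ℝ) ≤ 1/2
      · rw [dif_pos hs]
        show g (segMap u v huv _) = _
        congr 1
        apply Subtype.ext
        show (u:ℝ) + (2*(s:ℝ)) * ((v:ℝ) - u) = (u:ℝ) + (min (2*(s:ℝ)) 1 * c + max (2*(s:ℝ)-1) 0 * (1-c)) * ((w:ℝ) - u)
        have key2 : 2*(s:ℝ)*c*((w:ℝ)-u) = 2*(s:ℝ)*((v:ℝ)-u) := by
          calc 2*(s:ℝ)*c*((w:ℝ)-u) = 2*(s:ℝ)*(c*((w:ℝ)-u)) := by ring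
          _ = _ := by rw [hcmul]
        rw [min_eq_left (by linarith), max_eq_right (by linarith), zero_mul, add_zero, key2]
      · rw [dif_neg hs]
        push_neg at hs
        show g (segMap v w hvw _) = _
        congr 1
        apply Subtype.ext
        show (v:ℝ) + (2*(s:ℝ)-1) * ((w:ℝ) - v) = (u:ℝ) + (min (2*(s:ℝ)) 1 * c + max (2*(s:ℝ)-1) 0 * (1-c)) * ((w:ℝ) - u)
        rw [min_eq_right (by linarith), max_eq_left (by linarith)]
        have expand : (1 * c + (2*(s:ℝ)-1) * (1-c)) * ((w:ℝ) - u)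
            = c * ((w:ℝ)-u) + (2*(s:ℝ)-1) * (((w:ℝ)-u) - c * ((w:ℝ)-u)) := by ring
        rw [expand, hcmul]
        ring
    rw [key]
    exact ⟨(Path.Homotopy.reparam _ φ hφcont hφ0 hφ1).symm⟩


variable {X : Type*} [MetricSpace X]

lemma jump_right (f : I → X) (hf : Continuous f)
    (hfin : eVariationOn f (univ : Set I) ≠ ⊤) {t : I} (ht : t < 1)
    {η : ℝ≥0∞} (hη : 0 < η) :
    ∃ b : I, t < b ∧ eVariationOn f (Icc t b) ≤ η := by
  classical
  set W := eVariationOn f (Icc t 1) with hW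
  have hWfin : W ≠ ⊤ := fun h => hfin (top_le_iff.1 (h ▸ eVariationOn.mono f (subset_univ _)))
  -- Step 1 : W ≤ variation on Ioc t 1
  have step1 : W ≤ eVariationOn f (Ioc t 1) := by
    apply iSup_le
    rintro ⟨n, u, hu, us⟩
    apply ENNReal.le_of_forall_pos_le_add
    intro ε hε _
    rcases Nat.eq_zero_or_pos n with rfl | hn
    · simp
    set εn : ℝ≥0∞ := (ε : ℝ≥0∞) / n with hεn
    have hεn_ne_top : εn ≠ ⊤ :=
      ne_of_lt (ENNReal.div_lt_top ENNReal.coe_ne_top (by exact_mod_cast hn.ne'))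
    have hεn_ne_zero : εn ≠ 0 := by
      simp only [hεn, ne_eq, ENNReal.div_eq_zero_iff]
      push_neg
      exact ⟨by exact_mod_cast hε.ne', by simp⟩
    set εr : ℝ := εn.toReal with hεr
    have hεr_pos : 0 < εr := ENNReal.toReal_pos hεn_ne_zero hεn_ne_top
    -- continuity at t
    obtain ⟨d, hd_pos, hd⟩ := Metric.continuousAt_iff.1 (hf.continuousAt (x := t)) εr hεr_pos
    -- the first partition point above t
    set S : Finset ℕ := (Finset.range (n+1)).filter (fun i => t < u i) with hS
    set b₀ : I := if h : S.Nonempty then S.inf' h u else 1 with hb₀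
    have hb₀t : t < b₀ := by
      rw [hb₀]
      split_ifs with h
      · rw [Finset.lt_inf'_iff]
        intro i hi
        exact (Finset.mem_filter.1 hi).2
      · exact ht
    have hb₀le : ∀ i, t < u i → i ≤ n → b₀ ≤ u i := by
      intro i hi hin
      rw [hb₀]
      have hiS : i ∈ S := Finset.mem_filter.2 ⟨Finset.mem_range.2 (Nat.lt_succ_of_le hin), hi⟩
      rw [dif_pos ⟨i, hiS⟩]
      exact Finset.inf'_le u hiS
    -- construct b
    have hbmem : min ((b₀:ℝ)) ((t:ℝ) + d/2) ∈ I := by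
      constructor
      · exact le_min b₀.2.1 (by linarith [t.2.1])
      · exact min_le_of_left_le b₀.2.2
    set b : I := ⟨min ((b₀:ℝ)) ((t:ℝ) + d/2), hbmem⟩ with hb
    have hbt : t < b := by
      rw [← Subtype.coe_lt_coe]
      exact lt_min (Subtype.coe_lt_coe.2 hb₀t) (by linarith)
    have hble : ∀ i, t < u i → i ≤ n → b ≤ u i := fun i hi hin =>
      le_trans (by rw [← Subtype.coe_le_coe]; exact min_le_left _ _) (hb₀le i hi hin)
    have hbd : edist (f b) (f t) ≤ εn := by
      have hdist : dist b t < d := by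
        rw [Subtype.dist_eq, Real.dist_eq, abs_of_nonneg (by
          linarith [Subtype.coe_lt_coe.2 hbt])]
        have : (b:ℝ) ≤ (t:ℝ) + d/2 := min_le_right _ _
        linarith
      have := hd hdist
      rw [edist_dist]
      calc ENNReal.ofReal (dist (f b) (f t)) ≤ ENNReal.ofReal εr :=
        ENNReal.ofReal_le_ofReal this.le
      _ = εn := ENNReal.ofReal_toReal hεn_ne_top
    -- the shifted partition
    set v : ℕ → I := fun i => max (u i) b with hv
    have hvmono : Monotone v := fun i j hij => max_le_max (hu hij) le_rfl
    have hvmem : ∀ i, v i ∈ Ioc t 1 :=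
      fun i => ⟨lt_of_lt_of_le hbt (le_max_right _ _),
        max_le (us i).2 (Subtype.coe_le_coe.1 b.2.2)⟩
    have hterm : ∀ i, i < n →
        edist (f (u (i+1))) (f (u i)) ≤ edist (f (v (i+1))) (f (v i)) + εn := by
      intro i hi
      by_cases h1 : t < u i
      · have e1 : v i = u i := max_eq_left (hble i h1 hi.le)
        have e2 : v (i+1) = u (i+1) :=
          max_eq_left (hble (i+1) (lt_of_lt_of_le h1 (hu (Nat.le_succ i))) hi)
        rw [e1, e2]
        exact le_self_add
      · have hut : u i = t := le_antisymm (not_lt.1 h1) (us i).1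
        have e1 : v i = b := max_eq_right (hut.symm ▸ hbt.le)
        by_cases h3 : t < u (i+1)
        · have e2 : v (i+1) = u (i+1) := max_eq_left (hble (i+1) h3 hi)
          rw [e1, e2, hut]
          calc edist (f (u (i+1))) (f t)
              ≤ edist (f (u (i+1))) (f b) + edist (f b) (f t) := edist_triangle _ _ _
          _ ≤ edist (f (u (i+1))) (f b) + εn := add_le_add_right hbd _
        · have hut2 : u (i+1) = t := le_antisymm (not_lt.1 h3) (us (i+1)).1
          rw [hut, hut2]
          simp
    calc (∑ i ∈ Finset.range n, edist (f (u (i + 1))) (f (u i)))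
        ≤ ∑ i ∈ Finset.range n, (edist (f (v (i+1))) (f (v i)) + εn) :=
          Finset.sum_le_sum (fun i hi => hterm i (Finset.mem_range.1 hi))
    _ = (∑ i ∈ Finset.range n, edist (f (v (i+1))) (f (v i))) + n * εn := by
          rw [Finset.sum_add_distrib, Finset.sum_const, Finset.card_range, nsmul_eq_mul]
    _ ≤ eVariationOn f (Ioc t 1) + n * εn :=
          add_le_add_left (eVariationOn.sum_le (f := f) (n := n) hvmono hvmem) _
    _ = eVariationOn f (Ioc t 1) + ε := by
          congr 1
          rw [hεn, ENNReal.mul_div_cancel (by exact_mod_cast hn.ne') (by simp)]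
  -- Step 2 : variation on Ioc is a sup of variations on closed subintervals
  have step2 : eVariationOn f (Ioc t 1) ≤ ⨆ (b : I) (_ : b ∈ Ioc t 1), eVariationOn f (Icc b 1) := by
    apply iSup_le
    rintro ⟨n, u, hu, us⟩
    have h1 : (∑ i ∈ Finset.range n, edist (f (u (i + 1))) (f (u i)))
        ≤ eVariationOn f (Icc (u 0) 1) :=
      eVariationOn.sum_le (f := f) (n := n) hu (fun i => ⟨hu (Nat.zero_le i), (us i).2⟩)
    exact le_trans h1 (le_iSup₂_of_le (u 0) (us 0) le_rfl)
  -- Step 3 : conclude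
  by_cases hcase : W ≤ η
  · exact ⟨1, ht, hcase⟩
  push_neg at hcase
  have hθ : W - η < W := ENNReal.sub_lt_self hWfin
    (by rintro h; rw [h] at hcase; exact absurd hcase (not_lt.2 zero_le)) hη.ne'
  have : W - η < ⨆ (b : I) (_ : b ∈ Ioc t 1), eVariationOn f (Icc b 1) :=
    lt_of_lt_of_le hθ (le_trans step1 step2)
  rw [lt_iSup_iff] at this
  obtain ⟨b, hb⟩ := this
  rw [lt_iSup_iff] at hb
  obtain ⟨hbmem, hbvar⟩ := hb
  refine ⟨b, hbmem.1, ?_⟩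
  have hadd : eVariationOn f (Icc t b) + eVariationOn f (Icc b 1) = W := by
    have := eVariationOn.Icc_add_Icc f (s := (univ : Set I)) hbmem.1.le hbmem.2 (mem_univ b)
    simpa using this
  have hc_le : eVariationOn f (Icc b 1) ≤ W := le_trans (le_add_self) hadd.le
  have hc_fin : eVariationOn f (Icc b 1) ≠ ⊤ := fun h => hWfin (top_le_iff.1 (h ▸ hc_le))
  have hWeq : W = (W - η) + η := (tsub_add_cancel_of_le hcase.le).symm
  have : eVariationOn f (Icc t b) + eVariationOn f (Icc b 1)
      ≤ η + eVariationOn f (Icc b 1) := by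
    rw [hadd]
    calc W = (W - η) + η := hWeq
    _ ≤ eVariationOn f (Icc b 1) + η := add_le_add_left hbvar.le _
    _ = η + eVariationOn f (Icc b 1) := add_comm _ _
  exact (ENNReal.add_le_add_iff_right hc_fin).1 this


lemma symm_image_Icc (p r : I) (h : p ≤ r) :
    unitInterval.symm '' Icc p r = Icc (unitInterval.symm r) (unitInterval.symm p) := by
  ext y
  simp only [mem_image, mem_Icc]
  constructor
  · rintro ⟨z, ⟨hz1, hz2⟩, rfl⟩
    have h1 := Subtype.coe_le_coe.2 hz1
    have h2 := Subtype.coe_le_coe.2 hz2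
    constructor <;> rw [← Subtype.coe_le_coe] <;>
      simp only [unitInterval.coe_symm_eq] <;> linarith
  · rintro ⟨hy1, hy2⟩
    refine ⟨unitInterval.symm y, ?_, unitInterval.symm_symm y⟩
    have h1 := Subtype.coe_le_coe.2 hy1
    have h2 := Subtype.coe_le_coe.2 hy2
    simp only [unitInterval.coe_symm_eq] at h1 h2
    constructor <;> rw [← Subtype.coe_le_coe] <;>
      simp only [unitInterval.coe_symm_eq] <;> linarith

lemma symm_antitone : Antitone (unitInterval.symm) := by
  intro a b hab
  rw [← Subtype.coe_le_coe]
  simp only [unitInterval.coe_symm_eq]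
  have := Subtype.coe_le_coe.2 hab
  linarith

lemma jump_left (f : I → X) (hf : Continuous f)
    (hfin : eVariationOn f (univ : Set I) ≠ ⊤) {t : I} (ht : 0 < t)
    {η : ℝ≥0∞} (hη : 0 < η) :
    ∃ a : I, a < t ∧ eVariationOn f (Icc a t) ≤ η := by
  set g : I → X := f ∘ unitInterval.symm with hg
  have hgc : Continuous g := hf.comp unitInterval.continuous_symm
  have himg : unitInterval.symm '' (univ : Set I) = univ := by
    apply Subset.antisymm (subset_univ _)
    intro y _
    exact ⟨unitInterval.symm y, mem_univ _, unitInterval.symm_symm y⟩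
  have hgfin : eVariationOn g (univ : Set I) ≠ ⊤ := by
    rw [hg, eVariationOn.comp_eq_of_antitoneOn f _ (symm_antitone.antitoneOn _), himg]
    exact hfin
  have hst : unitInterval.symm t < 1 := by
    rw [← Subtype.coe_lt_coe]
    simp only [unitInterval.coe_symm_eq, Icc.coe_one]
    have := Subtype.coe_lt_coe.2 ht
    simp only [Icc.coe_zero] at this
    linarith
  obtain ⟨b, hb1, hb2⟩ := jump_right g hgc hgfin hst hη
  refine ⟨unitInterval.symm b, ?_, ?_⟩
  · have h1 := Subtype.coe_lt_coe.2 hb1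
    simp only [unitInterval.coe_symm_eq] at h1
    rw [← Subtype.coe_lt_coe]
    simp only [unitInterval.coe_symm_eq]
    linarith
  · have := eVariationOn.comp_eq_of_antitoneOn f unitInterval.symm
      (symm_antitone.antitoneOn (Icc (unitInterval.symm t) b))
    rw [← hg] at this
    rw [this, symm_image_Icc _ _ (le_trans hb1.le (le_refl b)) ] at hb2
    · rw [unitInterval.symm_symm] at hb2
      exact hb2

lemma uniform_small (f : I → X) (hf : Continuous f)
    (hfin : eVariationOn f (univ : Set I) ≠ ⊤) {η : ℝ≥0∞} (hη : 0 < η) :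
    ∃ δ : ℝ, 0 < δ ∧ ∀ a b : I, a ≤ b → (b:ℝ) - a < δ → eVariationOn f (Icc a b) ≤ η := by
  classical
  have hcover : ∀ t : I, ∃ U : Set I, IsOpen U ∧ t ∈ U ∧
      ∀ a ∈ U, ∀ b ∈ U, a ≤ b → eVariationOn f (Icc a b) ≤ η := by
    intro t
    by_cases ht0 : t = 0
    · subst ht0
      obtain ⟨b, hb1, hb2⟩ := jump_right f hf hfin (show (0:I) < 1 by
        rw [← Subtype.coe_lt_coe]; norm_num) hη
      refine ⟨Iio b, ?_, hb1, ?_⟩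
      · have : (Iio b : Set I) = Subtype.val ⁻¹' (Iio (b:ℝ)) := by
          ext z; simp [Subtype.coe_lt_coe]
        rw [this]
        exact isOpen_Iio.preimage continuous_subtype_val
      · intro a ha b' hb' hab
        refine le_trans (eVariationOn.mono f ?_) hb2
        intro z hz
        exact ⟨le_trans (unitInterval.nonneg' ) hz.1, le_trans hz.2 (le_of_lt hb')⟩
    · by_cases ht1 : t = 1
      · subst ht1
        obtain ⟨a, ha1, ha2⟩ := jump_left f hf hfin (show (0:I) < 1 by
          rw [← Subtype.coe_lt_coe]; norm_num) hη
        refine ⟨Ioi a, ?_, ha1, ?_⟩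
        · have : (Ioi a : Set I) = Subtype.val ⁻¹' (Ioi (a:ℝ)) := by
            ext z; simp [Subtype.coe_lt_coe]
          rw [this]
          exact isOpen_Ioi.preimage continuous_subtype_val
        · intro a' ha' b' hb' hab
          refine le_trans (eVariationOn.mono f ?_) ha2
          intro z hz
          exact ⟨le_trans (le_of_lt ha') hz.1, le_trans hz.2 (unitInterval.le_one')⟩
      · have ht0' : 0 < t := lt_of_le_of_ne (unitInterval.nonneg') (Ne.symm ht0)
        have ht1' : t < 1 := lt_of_le_of_ne (unitInterval.le_one') ht1
        have hη2 : 0 < η / 2 := ENNReal.half_pos hη.ne'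
        obtain ⟨b, hb1, hb2⟩ := jump_right f hf hfin ht1' hη2
        obtain ⟨a, ha1, ha2⟩ := jump_left f hf hfin ht0' hη2
        refine ⟨Ioo a b, ?_, ⟨ha1, hb1⟩, ?_⟩
        · have : (Ioo a b : Set I) = Subtype.val ⁻¹' (Ioo (a:ℝ) (b:ℝ)) := by
            ext z; simp [Subtype.coe_lt_coe]
          rw [this]
          exact isOpen_Ioo.preimage continuous_subtype_val
        · intro a' ha' b' hb' hab
          have hsub : Icc a' b' ⊆ Icc a b :=
            Icc_subset_Icc (le_of_lt ha'.1) (le_of_lt hb'.2)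
          refine le_trans (eVariationOn.mono f hsub) ?_
          have hadd : eVariationOn f (Icc a t) + eVariationOn f (Icc t b)
              = eVariationOn f (Icc a b) := by
            have := eVariationOn.Icc_add_Icc f (s := (univ : Set I)) ha1.le hb1.le (mem_univ t)
            simpa using this
          rw [← hadd]
          calc eVariationOn f (Icc a t) + eVariationOn f (Icc t b)
              ≤ η/2 + η/2 := add_le_add ha2 hb2
          _ = η := ENNReal.add_halves η
  choose U hUopen hUmem hUvar using hcover
  obtain ⟨δ, hδpos, hδ⟩ := lebesgue_number_lemma_of_metric isCompact_univ hUopen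
    (fun z _ => mem_iUnion.2 ⟨z, hUmem z⟩)
  refine ⟨δ, hδpos, ?_⟩
  intro a b hab hd
  obtain ⟨t, ht⟩ := hδ a (mem_univ a)
  have haU : a ∈ U t := ht (mem_ball_self hδpos)
  have hbU : b ∈ U t := ht (by
    rw [mem_ball, Subtype.dist_eq, Real.dist_eq, abs_of_nonneg
      (by linarith [Subtype.coe_le_coe.2 hab])]
    exact hd)
  exact hUvar t a haU b hbU hab



variable {Y : Type*} [TopologicalSpace Y]

def o (a : Y) : FundamentalGroupoid Y := ⟨a⟩

def mor {a b : Y} (γ : Path a b) : o a ⟶ o b := ⟦γ⟧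

lemma mor_comp {a b c : Y} (γ : Path a b) (γ' : Path b c) :
    mor (γ.trans γ') = mor γ ≫ mor γ' :=
  (Path.Homotopic.Quotient.mk_trans γ γ')

lemma mor_id (a : Y) : mor (Path.refl a) = 𝟙 (o a) := rfl

lemma mor_symm {a b : Y} (γ : Path a b) : mor γ.symm = Groupoid.inv (mor γ) := rfl

lemma mor_eq_of_homotopic {a b : Y} {γ γ' : Path a b} (h : γ.Homotopic γ') :
    mor γ = mor γ' := Quotient.sound h

lemma homotopic_of_mor_eq {a b : Y} {γ γ' : Path a b} (h : mor γ = mor γ') :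
    γ.Homotopic γ' := Quotient.exact h

lemma cast_rfl_rfl {a b : Y} (γ : Path a b) : γ.cast rfl rfl = γ := by
  ext t; rfl

lemma homotopic_cast {a b a' b' : Y} (γ γ' : Path a b) (h : γ.Homotopic γ')
    (ha : a' = a) (hb : b' = b) : (γ.cast ha hb).Homotopic (γ'.cast ha hb) := by
  subst ha; subst hb
  rw [cast_rfl_rfl, cast_rfl_rfl]
  exact h


end SNL

open SNL in
/-- In a compact length space, a shortest noncontractible rectifiable loop
of length `L` whose image is contained in an open ball `B(q, δ)` satisfies `L < 2δ`. -/
theorem shortest_noncontractible_loop_in_ball_short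
    {X : Type*} [MetricSpace X] [CompactSpace X] (hX : IsLengthSpace X)
    {x : X} (C : Path x x) (L : ℝ) (hlen : pathLength C = ENNReal.ofReal L) (hL : 0 ≤ L)
    (hnc : Noncontractible C)
    (hshort : ∀ (y : X) (γ : Path y y), Noncontractible γ → pathLength C ≤ pathLength γ)
    (q : X) (δ : ℝ) (himage : Set.range C ⊆ ball q δ) :
    L < 2 * δ := by
  classical
  -- δ is positive
  have hxball : x ∈ ball q δ := himage ⟨0, C.source⟩
  have hδpos : 0 < δ := lt_of_le_of_lt dist_nonneg (mem_ball.1 hxball)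
  by_contra hcon
  push_neg at hcon   -- hcon : 2 * δ ≤ L
  have hLpos : 0 < L := lt_of_lt_of_le (by linarith) hcon
  set f : I → X := fun t => C t with hfdef
  have hfc : Continuous f := C.continuous
  have hfin : eVariationOn f (univ : Set I) ≠ ⊤ := by
    have : eVariationOn f (univ : Set I) = pathLength C := rfl
    rw [this, hlen]
    exact ENNReal.ofReal_ne_top
  -- maximum distance to q on the loop
  obtain ⟨z, hzK, hz⟩ := (isCompact_range C.continuous).exists_isMaxOn
    ⟨x, 0, C.source⟩ ((continuous_const.dist continuous_id).continuousOn)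
  rw [isMaxOn_iff] at hz
  set d : ℝ := dist q z with hddef
  have hdδ : d < δ := by
    have := himage hzK
    rw [mem_ball] at this
    rw [hddef, dist_comm]
    exact this
  have hd0 : 0 ≤ d := dist_nonneg
  have hball : ∀ s : I, dist q (f s) ≤ d := fun s => hz (f s) ⟨s, rfl⟩
  set δ' : ℝ := (d + δ) / 2 with hδ'def
  have hdδ' : d < δ' := by rw [hδ'def]; linarith
  have hδ'δ : δ' < δ := by rw [hδ'def]; linarith
  have hδ'0 : 0 ≤ δ' := by rw [hδ'def]; linarith
  set η : ℝ≥0∞ := ENNReal.ofReal (δ - δ') with hηdef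
  have hη : 0 < η := ENNReal.ofReal_pos.2 (by linarith)
  obtain ⟨δ₀, hδ₀, hmod⟩ := uniform_small f hfc hfin hη
  obtain ⟨m, hm⟩ := exists_nat_one_div_lt hδ₀
  set N : ℕ := m + 1 with hNdef
  have hNpos : 0 < (N:ℝ) := by positivity
  -- the subdivision points
  have hptmem : ∀ i : ℕ, min ((i:ℝ) / N) 1 ∈ I :=
    fun i => ⟨le_min (by positivity) zero_le_one, min_le_right _ _⟩
  set pt : ℕ → I := fun i => ⟨min ((i:ℝ) / N) 1, hptmem i⟩ with hptdef
  have pt0 : (pt 0 : ℝ) = 0 := by simp [hptdef]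
  have ptN : (pt N : ℝ) = 1 := by
    simp only [hptdef]
    rw [div_self hNpos.ne']
    norm_num
  have ecoe : ∀ j : ℕ, (pt j : ℝ) = min ((j:ℝ)/N) 1 := fun j => rfl
  have ptmono : Monotone pt := by
    apply monotone_nat_of_le_succ
    intro i
    rw [← Subtype.coe_le_coe, ecoe, ecoe]
    apply min_le_min _ le_rfl
    gcongr
    exact_mod_cast Nat.le_succ i
  have ptdiff : ∀ i : ℕ, (pt (i+1) : ℝ) - pt i ≤ 1 / N := by
    intro i
    rw [ecoe, ecoe]
    have h1 : ((i+1:ℕ):ℝ) / N = (i:ℝ)/N + 1/N := by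
      push_cast; ring
    have h3 : min ((i:ℝ)/N + 1/N) (1 + 1/N) = min ((i:ℝ)/N) 1 + 1/N :=
      (min_add_add_right _ _ _)
    have h2 : min (((i+1:ℕ):ℝ)/N) 1 ≤ min ((i:ℝ)/N) 1 + 1/N := by
      rw [← h3, h1]
      exact min_le_min le_rfl (by linarith [one_div_nonneg.mpr hNpos.le])
    linarith
  have hpiece : ∀ i : ℕ, eVariationOn f (Icc (pt i) (pt (i+1))) ≤ η := by
    intro i
    apply hmod _ _ (ptmono (Nat.le_succ i))
    calc (pt (i+1) : ℝ) - pt i ≤ 1 / N := ptdiff i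
    _ < δ₀ := by rw [hNdef]; push_cast; exact hm
  -- spokes from q to the subdivision points
  have hsp : ∀ i : ℕ, ∃ γ : Path q (f (pt i)), pathLength γ < ENNReal.ofReal δ' := by
    intro i
    obtain ⟨γ, hγ⟩ := hX q (f (pt i)) (δ' - dist q (f (pt i)))
      (by linarith [hball (pt i)])
    refine ⟨γ, ?_⟩
    convert hγ using 2
    ring
  choose sp hsp using hsp
  -- the small loops are all contractible
  set p : ∀ i : ℕ, Path (f (pt i)) (f (pt (i+1))) :=
    fun i => subpath f hfc (pt i) (pt (i+1)) (ptmono (Nat.le_succ i)) with hpdef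
  set ℓ : ℕ → Path q q := fun i => ((sp i).trans (p i)).trans (sp (i+1)).symm with hℓdef
  have hofreal_lt : ENNReal.ofReal δ' + η + ENNReal.ofReal δ' < ENNReal.ofReal L := by
    rw [hηdef, ← ENNReal.ofReal_add hδ'0 (by linarith), ← ENNReal.ofReal_add (by linarith) hδ'0]
    exact ENNReal.ofReal_lt_ofReal_iff hLpos |>.2 (by linarith)
  have hℓlen : ∀ i : ℕ, pathLength (ℓ i) < ENNReal.ofReal L := by
    intro i
    refine lt_of_le_of_lt ?_ hofreal_lt
    calc pathLength (ℓ i)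
        ≤ pathLength ((sp i).trans (p i)) + pathLength (sp (i+1)).symm :=
          pathLength_trans_le _ _
    _ ≤ (pathLength (sp i) + pathLength (p i)) + pathLength (sp (i+1)) :=
          add_le_add (pathLength_trans_le _ _) (pathLength_symm_le _)
    _ ≤ (ENNReal.ofReal δ' + η) + ENNReal.ofReal δ' := by
          apply add_le_add (add_le_add (hsp i).le ?_) (hsp (i+1)).le
          rw [hpdef]
          rw [pathLength_subpath]
          exact hpiece i
  have hℓcon : ∀ i : ℕ, (ℓ i).Homotopic (Path.refl q) := by
    intro i
    by_contra h
    exact absurd (hshort q (ℓ i) h) (not_le.2 (by rw [hlen]; exact hℓlen i))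
  -- the groupoid computation
  have claim : ∀ k : ℕ, k ≤ N →
      mor (sp 0) ≫ mor (subpath f hfc (pt 0) (pt k) (ptmono (Nat.zero_le k))) = mor (sp k) := by
    intro k
    induction k with
    | zero =>
      intro _
      rw [show subpath f hfc (pt 0) (pt 0) (ptmono (Nat.zero_le 0)) = Path.refl (f (pt 0)) from
        subpath_refl f hfc (pt 0), mor_id, Category.comp_id]
    | succ k ih =>
      intro hk1
      have hk : k ≤ N := le_trans (Nat.le_succ k) hk1
      have hdec : mor (subpath f hfc (pt 0) (pt (k+1)) (ptmono (Nat.zero_le (k+1))))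
          = mor (subpath f hfc (pt 0) (pt k) (ptmono (Nat.zero_le k))) ≫ mor (p k) := by
        rw [← mor_comp]
        exact mor_eq_of_homotopic
          (Path.Homotopic.symm (subpath_trans_homotopic f hfc _ _ _ _ _))
      have hl : mor (ℓ k) = 𝟙 (o q) := by
        rw [← mor_id]
        exact mor_eq_of_homotopic (hℓcon k)
      have hl2 : (mor (sp k) ≫ mor (p k)) ≫ Groupoid.inv (mor (sp (k+1))) = 𝟙 (o q) := by
        rw [← mor_symm, ← mor_comp, ← mor_comp]
        exact hl
      have hstep : mor (sp k) ≫ mor (p k) = mor (sp (k+1)) := by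
        have := congrArg (fun m => m ≫ mor (sp (k+1))) hl2
        simpa [Category.assoc, Groupoid.inv_comp, Category.comp_id, Category.id_comp] using this
      rw [hdec, ← Category.assoc, ih hk, hstep]
  -- transfer to a statement about C
  have hx0 : x = f (pt 0) := by
    have : pt 0 = (0 : I) := Subtype.ext pt0
    rw [this]
    exact C.source.symm
  have hxN : x = f (pt N) := by
    have : pt N = (1 : I) := Subtype.ext ptN
    rw [this]
    exact C.target.symm
  have hCr : C = (subpath f hfc (pt 0) (pt N) (ptmono (Nat.zero_le N))).cast hx0 hxN := by
    ext s
    show C s = f (segMap (pt 0) (pt N) _ s)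
    congr 1
    apply Subtype.ext
    show (s:ℝ) = (pt 0 : ℝ) + s * ((pt N : ℝ) - (pt 0 : ℝ))
    rw [pt0, ptN]
    ring
  have hrhom : (subpath f hfc (pt 0) (pt N) (ptmono (Nat.zero_le N))).Homotopic
      ((sp 0).symm.trans (sp N)) := by
    apply homotopic_of_mor_eq
    have h1 := claim N le_rfl
    have : mor (subpath f hfc (pt 0) (pt N) (ptmono (Nat.zero_le N)))
        = Groupoid.inv (mor (sp 0)) ≫ mor (sp N) := by
      rw [← h1, ← Category.assoc, Groupoid.inv_comp, Category.id_comp]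
    rw [this, mor_comp, mor_symm]
  set ρ : Path x x := (((sp 0).symm.trans (sp N)).cast hx0 hxN) with hρdef
  have hCρ : C.Homotopic ρ := by
    rw [hCr]
    exact homotopic_cast _ _ hrhom hx0 hxN
  have hρlen : pathLength ρ < ENNReal.ofReal L := by
    have hρeq : pathLength ρ = pathLength ((sp 0).symm.trans (sp N)) := rfl
    rw [hρeq]
    calc pathLength ((sp 0).symm.trans (sp N))
        ≤ pathLength (sp 0).symm + pathLength (sp N) := pathLength_trans_le _ _
    _ ≤ pathLength (sp 0) + pathLength (sp N) :=
          add_le_add_left (pathLength_symm_le _) _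
    _ ≤ ENNReal.ofReal δ' + ENNReal.ofReal δ' := add_le_add (hsp 0).le (hsp N).le
    _ = ENNReal.ofReal (δ' + δ') := (ENNReal.ofReal_add hδ'0 hδ'0).symm
    _ < ENNReal.ofReal L := ENNReal.ofReal_lt_ofReal_iff hLpos |>.2 (by linarith)
  have hρcon : ρ.Homotopic (Path.refl x) := by
    by_contra h
    exact absurd (hshort x ρ h) (not_le.2 (by rw [hlen]; exact hρlen))
  exact hnc (hCρ.trans hρcon)
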